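/- Let Fo > 0, θ_l ∈ ℝ, λ₀ > 0 with erf(λ₀) ≠ 0, and define θ_left(t, x) = θ_l · (1 − erf(x/(2√(t·Fo)))/erf(λ₀)) for t > 0 and x ∈ ℝ. Then θ_left satisfies the heat equation ∂_t θ_left(t, x) = Fo · ∂_xx θ_left(t, x) at every point (t, x) with t > 0. -/

import Mathlib

/-- The error function `erf x = (2/√π) ∫₀ˣ e^{−s²} ds`. -/
noncomputable def erf (x : ℝ) : ℝ :=
  (2 / Real.sqrt Real.pi) * ∫ s in (0:ℝ)..x, Real.exp (-s ^ 2)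

/-- The complementary error function `erfc = 1 - erf`. -/
noncomputable def erfc (x : ℝ) : ℝ := 1 - erf x

/-- Liquid-phase branch of the exact self-similar Stefan solution. -/
noncomputable def thetaLeft (Fo θl lam0 t x : ℝ) : ℝ :=
  θl * (1 - erf (x / (2 * Real.sqrt (t * Fo))) / erf lam0)

/-- Solid-phase branch of the exact self-similar Stefan solution. -/
noncomputable def thetaRight (Fo θr lam0 t x : ℝ) : ℝ :=
  θr * (1 - erfc (x / (2 * Real.sqrt (t * Fo))) / erfc lam0)

/-- The liquid–solid interface `λ(t) = 2lam0√(t·Fo)`. -/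
noncomputable def interface (Fo lam0 t : ℝ) : ℝ := 2 * lam0 * Real.sqrt (t * Fo)

/-- The exact self-similar solution of the two-phase Stefan problem. -/
noncomputable def thetaEx (Fo θl θr lam0 t x : ℝ) : ℝ :=
  if x ≤ interface Fo lam0 t then thetaLeft Fo θl lam0 t x else thetaRight Fo θr lam0 t x

/-- The derivative of `erf` is the Gaussian `(2/√π) e^{-x²}`. -/
lemma hasDerivAt_erf (x : ℝ) :
    HasDerivAt erf (2 / Real.sqrt Real.pi * Real.exp (-x ^ 2)) x := by
  have hc : Continuous fun s : ℝ => Real.exp (-s ^ 2) := by continuity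
  have h := intervalIntegral.integral_hasDerivAt_right
    (hc.intervalIntegrable 0 x) (hc.stronglyMeasurable.stronglyMeasurableAtFilter) hc.continuousAt
  exact h.const_mul (2 / Real.sqrt Real.pi)

/-- Spatial derivative of `thetaLeft`. -/
lemma hasDerivAt_thetaLeft_x (Fo θl lam0 t x : ℝ) :
    HasDerivAt (fun y => thetaLeft Fo θl lam0 t y)
      (-θl / erf lam0 * (2 / Real.sqrt Real.pi) * (1 / (2 * Real.sqrt (t * Fo))) *
        Real.exp (-(x / (2 * Real.sqrt (t * Fo))) ^ 2)) x := by
  have h1 : HasDerivAt (fun y : ℝ => y / (2 * Real.sqrt (t * Fo)))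
      (1 / (2 * Real.sqrt (t * Fo))) x := by
    simpa using (hasDerivAt_id x).div_const (2 * Real.sqrt (t * Fo))
  have h2 := (hasDerivAt_erf (x / (2 * Real.sqrt (t * Fo)))).comp x h1
  have h3 := ((h2.div_const (erf lam0)).const_sub 1).const_mul θl
  refine h3.congr_deriv ?_
  ring

/-- The liquid branch `θ_left` satisfies the heat equation `∂_t θ = Fo ∂_xx θ` for `t > 0`. -/
theorem thetaLeft_heat (Fo θl lam0 : ℝ) (hFo : 0 < Fo) (hlam0 : 0 < lam0) (herf : erf lam0 ≠ 0) :
    ∀ t : ℝ, 0 < t → ∀ x : ℝ,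
      deriv (fun τ => thetaLeft Fo θl lam0 τ x) t =
        Fo * deriv (deriv (fun y => thetaLeft Fo θl lam0 t y)) x := by
  intro t ht x
  set s := Real.sqrt (t * Fo) with hs_def
  have htFo : 0 < t * Fo := mul_pos ht hFo
  have hs : 0 < s := Real.sqrt_pos.mpr htFo
  have hπ : 0 < Real.sqrt Real.pi := Real.sqrt_pos.mpr Real.pi_pos
  -- time derivative
  have hts : HasDerivAt (fun τ => Real.sqrt (τ * Fo)) (Fo / (2 * s)) t := by
    have := ((hasDerivAt_id t).mul_const Fo).sqrt (ne_of_gt htFo)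
    simpa [hs_def] using this
  have hg : HasDerivAt (fun τ => x / (2 * Real.sqrt (τ * Fo)))
      ((0 * (2 * s) - x * (2 * (Fo / (2 * s)))) / (2 * s) ^ 2) t := by
    exact (hasDerivAt_const t x).div (hts.const_mul 2) (by positivity)
  have hgt := (hasDerivAt_erf (x / (2 * s))).comp t hg
  have hT : HasDerivAt (fun τ => thetaLeft Fo θl lam0 τ x)
      (θl * -(2 / Real.sqrt Real.pi * Real.exp (-(x / (2 * s)) ^ 2) *
        ((0 * (2 * s) - x * (2 * (Fo / (2 * s)))) / (2 * s) ^ 2) / erf lam0)) t := by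
    have h3 := ((hgt.div_const (erf lam0)).const_sub 1).const_mul θl
    exact h3
  rw [hT.deriv]
  -- spatial derivative function
  have hD : deriv (fun y => thetaLeft Fo θl lam0 t y) =
      fun y => -θl / erf lam0 * (2 / Real.sqrt Real.pi) * (1 / (2 * s)) *
        Real.exp (-(y / (2 * s)) ^ 2) := by
    funext y
    exact (hasDerivAt_thetaLeft_x Fo θl lam0 t y).deriv
  rw [hD]
  -- second spatial derivative
  have h1 : HasDerivAt (fun y : ℝ => y / (2 * s)) (1 / (2 * s)) x := by
    simpa using (hasDerivAt_id x).div_const (2 * s)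
  have h2 : HasDerivAt (fun y : ℝ => -(y / (2 * s)) ^ 2)
      (-(2 * (x / (2 * s)) ^ 1 * (1 / (2 * s)))) x := (h1.pow 2).neg
  have h4 := (h2.exp.const_mul
      (-θl / erf lam0 * (2 / Real.sqrt Real.pi) * (1 / (2 * s))))
  rw [h4.deriv]
  field_simp
  ring
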